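/- Let A > 0 and let d, r be real numbers with 0 < d ≤ r satisfying r²·arcsin(d/r) − d·√(r² − d²) = A. Then 2r·arcsin(d/r) ≥ √(2·A·π). -/

import Mathlib

open Real

lemma sin_ge_sub_cube' {x : ℝ} (hx : 0 ≤ x) : x - x ^ 3 / 6 ≤ Real.sin x := by
  have mono : MonotoneOn (fun x : ℝ => Real.sin x - x + x ^ 3 / 6) (Set.Ici 0) := by
    apply monotoneOn_of_deriv_nonneg (convex_Ici 0)
    · fun_prop
    · fun_prop
    · intro y hy
      have : deriv (fun x : ℝ => Real.sin x - x + x ^ 3 / 6) y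
          = Real.cos y - 1 + y ^ 2 / 2 := by
        have h1 : HasDerivAt (fun x : ℝ => Real.sin x - x + x ^ 3 / 6)
            (Real.cos y - 1 + 3 * y ^ 2 / 6) y := by
          have := ((Real.hasDerivAt_sin y).sub (hasDerivAt_id y)).add
            (((hasDerivAt_pow 3 y).div_const 6))
          simp at this; exact this
        rw [h1.deriv]; ring
      rw [this]
      nlinarith [Real.one_sub_sq_div_two_le_cos (x := y)]
  have h0 := mono (Set.self_mem_Ici) hx hx
  simp at h0
  linarith

lemma key_half {x : ℝ} (hx : 0 ≤ x) (hx2 : x ≤ π / 2) :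
    x ^ 2 - π * x + π * Real.sin x ≥ 0 := by
  rcases le_or_gt x (π - 2) with h | h
  · have hs := sin_ge_sub_cube' hx
    have hπ6 : π * x ≤ 6 := by nlinarith [Real.pi_lt_d2, Real.pi_gt_three]
    nlinarith [Real.pi_gt_three]
  · have hs := Real.mul_le_sin hx hx2
    -- sin x ≥ 2x/π; so π sin x ≥ 2x; x² - πx + 2x = x(x-(π-2)) ≥ 0
    have hπ : 0 < π := Real.pi_pos
    have h2 : 2 * x ≤ π * Real.sin x := by
      have := mul_le_mul_of_nonneg_left hs hπ.le
      calc 2 * x = π * (2 / π * x) := by field_simp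
        _ ≤ π * Real.sin x := this
    nlinarith

lemma key {x : ℝ} (hx : 0 ≤ x) (hx2 : x ≤ π) :
    x ^ 2 - π * x + π * Real.sin x ≥ 0 := by
  rcases le_or_gt x (π / 2) with h | h
  · exact key_half hx h
  · have h1 : Real.sin (π - x) = Real.sin x := Real.sin_pi_sub x
    have := key_half (x := π - x) (by linarith) (by linarith)
    nlinarith




/-- **Lemma 2.6** (inequality part). A circular segment cut off by a chord of length `2d`
from a circle of radius `r` (with `0 < d ≤ r`) having area
`r²·arcsin(d/r) − d·√(r² − d²) = A` has arc length `2r·arcsin(d/r)` at least `√(2Aπ)`. -/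
theorem stmt_5 (A d r : ℝ) (hA : 0 < A) (hd : 0 < d) (hdr : d ≤ r)
    (harea : r ^ 2 * Real.arcsin (d / r) - d * Real.sqrt (r ^ 2 - d ^ 2) = A) :
    2 * r * Real.arcsin (d / r) ≥ Real.sqrt (2 * A * Real.pi) := by
  have hr : 0 < r := lt_of_lt_of_le hd hdr
  set t := Real.arcsin (d / r) with ht
  have hdr1 : d / r ≤ 1 := (div_le_one hr).mpr hdr
  have hdr0 : 0 < d / r := div_pos hd hr
  have hsin : Real.sin t = d / r := Real.sin_arcsin (by linarith) hdr1
  have hcos : Real.cos t = Real.sqrt (1 - (d / r) ^ 2) := Real.cos_arcsin _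
  have ht0 : 0 < t := Real.arcsin_pos.mpr hdr0
  have ht2 : t ≤ π / 2 := Real.arcsin_le_pi_div_two _
  have hsq : Real.sqrt (r ^ 2 - d ^ 2) = r * Real.cos t := by
    rw [hcos]
    rw [show (1 : ℝ) - (d / r) ^ 2 = (r ^ 2 - d ^ 2) / r ^ 2 by field_simp,
      Real.sqrt_div (by nlinarith : (0:ℝ) ≤ r ^ 2 - d ^ 2), Real.sqrt_sq hr.le]
    field_simp
  have hAeq : A = r ^ 2 * (t - Real.sin t * Real.cos t) := by
    rw [← harea, hsq]
    have : d = r * Real.sin t := by rw [hsin]; field_simp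
    rw [this]; ring
  have hs2 : Real.sin (2 * t) = 2 * Real.sin t * Real.cos t := Real.sin_two_mul t
  have hk := key (x := 2 * t) (by linarith) (by linarith)
  have hk' : π * (2 * t - Real.sin (2 * t)) ≤ (2 * t) ^ 2 := by nlinarith
  have hmain : 2 * A * π ≤ (2 * r * t) ^ 2 := by
    have hm := mul_le_mul_of_nonneg_left hk' (sq_nonneg r)
    rw [hs2] at hm
    rw [hAeq]; nlinarith
  have h1 : Real.sqrt (2 * A * π) ≤ Real.sqrt ((2 * r * t) ^ 2) :=
    Real.sqrt_le_sqrt hmain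
  rw [Real.sqrt_sq (by positivity : (0:ℝ) ≤ 2 * r * t)] at h1
  exact h1
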